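/- Let n, m, l be natural numbers with n + m + l even, and set P₁ := n² + m² + l² − 2nm − 2nl − 2ml. Then I_{n,m,l,4} = (n+m−l−5)‼ · (n−m+l−5)‼ · (−n+m+l−5)‼ · P₄, where P₄ := P₁⁴ − 20·P₁³ + (−96·nml + 118)·P₁² + (960·nml − 180)·P₁ − 256·nml·(n³+m³+l³) + 256·nml·(n²m + n²l + m²n + m²l + l²n + l²m) + 2304·n²m²l² − 1536·nml·(nm + nl + ml) + 2304·nml·(n+m+l) − 3936·nml + 81, the three double-factorial arguments are odd integers (possibly negative), and ‼ denotes the extended double factorial. -/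

import Mathlib

open MeasureTheory Real

/-- Physicists' Hermite polynomials: `H 0 x = 1`, `H 1 x = 2x`,
`H (n+1) x = 2x * H n x - 2n * H (n-1) x`. -/
noncomputable def hermiteP : ℕ → ℝ → ℝ
  | 0, _ => 1
  | 1, x => 2 * x
  | n + 2, x => 2 * x * hermiteP (n + 1) x - 2 * ((n : ℝ) + 1) * hermiteP n x

/-- Extended double factorial of an odd integer `a`:
`a‼ = 2^((a+1)/2) * Γ(a/2 + 1) / √π`. -/
noncomputable def ddfact (a : ℤ) : ℝ :=
  (2 : ℝ) ^ ((a + 1) / 2) * Real.Gamma ((a : ℝ) / 2 + 1) / Real.sqrt π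

/-- `I n m l k = √(2/π) ∫ H_n(x) H_m(x) H_l(x) H_k(x) e^{-2x²} dx`. -/
noncomputable def I (n m l k : ℕ) : ℝ :=
  Real.sqrt (2 / π) *
    ∫ x : ℝ,
      hermiteP n x * hermiteP m x * hermiteP l x * hermiteP k x * Real.exp (-2 * x ^ 2)

section helpers
open Filter Topology

set_option maxHeartbeats 1600000

lemma hermiteP_succ (n : ℕ) (x : ℝ) :
    hermiteP (n + 1) x = 2 * x * hermiteP n x - 2 * (n : ℝ) * hermiteP (n - 1) x := by
  match n with
  | 0 => simp [hermiteP]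
  | n + 1 => simp only [hermiteP]; push_cast; ring

lemma hermiteP_hasDerivAt : ∀ (n : ℕ) (x : ℝ),
    HasDerivAt (fun y => hermiteP n y) (2 * (n : ℝ) * hermiteP (n - 1) x) x
  | 0, x => by
      simpa [hermiteP] using (hasDerivAt_const x (1 : ℝ)).congr_deriv (by norm_num)
  | 1, x => by
      have h : HasDerivAt (fun y : ℝ => 2 * y) 2 x := by
        simpa using (hasDerivAt_id x).const_mul (2:ℝ)
      have : hermiteP 1 = fun y : ℝ => 2 * y := rfl
      rw [this]
      convert h using 1
      simp [hermiteP]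
  | n + 2, x => by
      have h1 := hermiteP_hasDerivAt (n + 1) x
      have h0 := hermiteP_hasDerivAt n x
      have hx : HasDerivAt (fun y : ℝ => y) 1 x := hasDerivAt_id x
      have hprod : HasDerivAt (fun y : ℝ => 2 * y * hermiteP (n+1) y - 2 * ((n:ℝ)+1) * hermiteP n y)
          (2 * 1 * hermiteP (n+1) x + 2 * x * (2 * ((n+1:ℕ):ℝ) * hermiteP ((n+1)-1) x)
            - 2 * ((n:ℝ)+1) * (2 * (n:ℝ) * hermiteP (n-1) x)) x := by
        exact ((((hx.const_mul 2)).mul h1)).sub ((h0.const_mul (2 * ((n:ℝ)+1))))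
      have heq : (fun y : ℝ => hermiteP (n+2) y)
          = fun y : ℝ => 2 * y * hermiteP (n+1) y - 2 * ((n:ℝ)+1) * hermiteP n y := by
        funext y; simp [hermiteP]
      rw [heq]
      convert hprod using 1
      push_cast
      rw [hermiteP_succ n x]
      ring

lemma hermiteP_poly : ∀ n : ℕ, ∃ p : Polynomial ℝ, ∀ x, hermiteP n x = p.eval x
  | 0 => ⟨1, by simp [hermiteP]⟩
  | 1 => ⟨Polynomial.C 2 * Polynomial.X, by simp [hermiteP]⟩
  | n + 2 => by
      obtain ⟨p, hp⟩ := hermiteP_poly (n + 1)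
      obtain ⟨q, hq⟩ := hermiteP_poly n
      exact ⟨Polynomial.C 2 * Polynomial.X * p - Polynomial.C (2 * ((n:ℝ)+1)) * q,
        fun x => by simp [hermiteP, hp, hq]⟩

lemma hermiteP_continuous (n : ℕ) : Continuous (fun x => hermiteP n x) := by
  obtain ⟨p, hp⟩ := hermiteP_poly n
  simpa only [← hp] using p.continuous

lemma pow_mul_exp_le (j : ℕ) (x : ℝ) :
    |x| ^ j * Real.exp (-x ^ 2) ≤ Real.sqrt (j.factorial : ℝ) := by
  have h0 : (0:ℝ) ≤ |x| ^ j * Real.exp (-x ^ 2) :=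
    mul_nonneg (pow_nonneg (abs_nonneg x) j) (Real.exp_pos _).le
  rw [← Real.sqrt_sq h0]
  apply Real.sqrt_le_sqrt
  have h2 : (x ^ 2) ^ j ≤ (j.factorial : ℝ) * Real.exp (x ^ 2) := by
    have h := Real.pow_div_factorial_le_exp (x := x ^ 2) (sq_nonneg x) j
    rw [div_le_iff₀ (by positivity)] at h
    linarith [h]
  have e1 : (0:ℝ) < Real.exp (-x ^ 2) := Real.exp_pos _
  have h1 : (|x| ^ j * Real.exp (-x ^ 2)) ^ 2
      = (x ^ 2) ^ j * (Real.exp (-x ^ 2) * Real.exp (-x ^ 2)) := by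
    rw [mul_pow, ← pow_mul, ← pow_mul, mul_comm j 2, pow_mul, sq_abs, pow_mul]
    ring
  rw [h1]
  have h3 : Real.exp (x^2) * (Real.exp (-x ^ 2) * Real.exp (-x ^ 2)) = Real.exp (-x^2) := by
    rw [← Real.exp_add, ← Real.exp_add]; ring_nf
  have h4 : Real.exp (-x^2) ≤ 1 := Real.exp_le_one_iff.mpr (by nlinarith [sq_nonneg x])
  have h5 : (0:ℝ) ≤ (j.factorial : ℝ) := Nat.cast_nonneg _
  calc (x ^ 2) ^ j * (Real.exp (-x ^ 2) * Real.exp (-x ^ 2))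
      ≤ ((j.factorial : ℝ) * Real.exp (x ^ 2)) * (Real.exp (-x ^ 2) * Real.exp (-x ^ 2)) := by
        apply mul_le_mul_of_nonneg_right h2 (by positivity)
    _ = (j.factorial : ℝ) * Real.exp (-x ^ 2) := by rw [mul_assoc, h3]
    _ ≤ (j.factorial : ℝ) := by nlinarith


lemma exp_sq_split (x : ℝ) : Real.exp (-2 * x ^ 2) = Real.exp (-x ^ 2) * Real.exp (-x ^ 2) := by
  rw [← Real.exp_add]; ring_nf

lemma norm_pow_gauss_le (j : ℕ) (x : ℝ) :
    ‖x ^ j * Real.exp (-2 * x ^ 2)‖ ≤ Real.sqrt (j.factorial : ℝ) * Real.exp (-x ^ 2) := by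
  rw [norm_mul, norm_pow, Real.norm_eq_abs, Real.norm_eq_abs,
    abs_of_pos (Real.exp_pos _), exp_sq_split, ← mul_assoc]
  exact mul_le_mul_of_nonneg_right (pow_mul_exp_le j x) (Real.exp_pos _).le

lemma integrable_pow_gauss (j : ℕ) :
    Integrable (fun x : ℝ => x ^ j * Real.exp (-2 * x ^ 2)) := by
  apply Integrable.mono' ((integrable_exp_neg_mul_sq one_pos).const_mul
    (Real.sqrt (j.factorial : ℝ)))
  · exact ((continuous_pow j).mul (by continuity)).aestronglyMeasurable
  · filter_upwards with x
    simpa using norm_pow_gauss_le j x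

lemma tendsto_pow_gauss (j : ℕ) :
    Tendsto (fun x : ℝ => x ^ j * Real.exp (-2 * x ^ 2)) (cocompact ℝ) (𝓝 0) := by
  apply squeeze_zero_norm (norm_pow_gauss_le j)
  have h := tendsto_rpow_abs_mul_exp_neg_mul_sq_cocompact one_pos 0
  simp only [Real.rpow_zero, one_mul, neg_one_mul] at h
  simpa using h.const_mul (Real.sqrt (j.factorial : ℝ))

lemma integrable_peval (p : Polynomial ℝ) :
    Integrable (fun x : ℝ => p.eval x * Real.exp (-2 * x ^ 2)) := by
  induction p using Polynomial.induction_on' with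
  | add p q hp hq =>
      simpa only [Polynomial.eval_add, add_mul, Pi.add_def] using hp.add hq
  | monomial n a =>
      have := (integrable_pow_gauss n).const_mul a
      simpa only [Polynomial.eval_monomial, mul_assoc] using this

lemma tendsto_peval (p : Polynomial ℝ) :
    Tendsto (fun x : ℝ => p.eval x * Real.exp (-2 * x ^ 2)) (cocompact ℝ) (𝓝 0) := by
  induction p using Polynomial.induction_on' with
  | add p q hp hq =>
      have := hp.add hq
      simpa only [Polynomial.eval_add, add_mul, add_zero] using this
  | monomial n a =>
      have := (tendsto_pow_gauss n).const_mul a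
      simpa only [Polynomial.eval_monomial, mul_assoc, mul_zero] using this

noncomputable def HG (a b c d : ℕ) : ℝ → ℝ := fun x =>
  hermiteP a x * hermiteP b x * hermiteP c x * hermiteP d x * Real.exp (-2 * x ^ 2)

lemma HG_eq_peval (a b c d : ℕ) : ∃ p : Polynomial ℝ,
    HG a b c d = fun x => p.eval x * Real.exp (-2 * x ^ 2) := by
  obtain ⟨pa, ha⟩ := hermiteP_poly a
  obtain ⟨pb, hb⟩ := hermiteP_poly b
  obtain ⟨pc, hc⟩ := hermiteP_poly c
  obtain ⟨pd, hd⟩ := hermiteP_poly d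
  exact ⟨pa * pb * pc * pd, by funext x; simp [HG, ha, hb, hc, hd]⟩

lemma integrable_HG (a b c d : ℕ) : Integrable (HG a b c d) := by
  obtain ⟨p, hp⟩ := HG_eq_peval a b c d
  rw [hp]; exact integrable_peval p

lemma tendsto_HG_atTop (a b c d : ℕ) : Tendsto (HG a b c d) atTop (𝓝 0) := by
  obtain ⟨p, hp⟩ := HG_eq_peval a b c d
  rw [hp]
  exact (tendsto_peval p).mono_left (by rw [cocompact_eq_atBot_atTop]; exact le_sup_right)

lemma tendsto_HG_atBot (a b c d : ℕ) : Tendsto (HG a b c d) atBot (𝓝 0) := by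
  obtain ⟨p, hp⟩ := HG_eq_peval a b c d
  rw [hp]
  exact (tendsto_peval p).mono_left (by rw [cocompact_eq_atBot_atTop]; exact le_sup_left)

lemma key_deriv (a b c d : ℕ) (x : ℝ) :
    HasDerivAt (HG a b c d)
      (2 * (a:ℝ) * HG (a-1) b c d x + 2 * (b:ℝ) * HG a (b-1) c d x
        + 2 * (c:ℝ) * HG a b (c-1) d x
        + (2 * (d:ℝ) * HG a b c (d-1) x
          - (2 * HG a b c (d+1) x + 4 * (d:ℝ) * HG a b c (d-1) x))) x := by
  have ha := hermiteP_hasDerivAt a x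
  have hb := hermiteP_hasDerivAt b x
  have hc := hermiteP_hasDerivAt c x
  have hd := hermiteP_hasDerivAt d x
  have hexp : HasDerivAt (fun y : ℝ => Real.exp (-2 * y ^ 2))
      (Real.exp (-2 * x ^ 2) * (-2 * (2 * x ^ 1))) x :=
    ((hasDerivAt_pow 2 x).const_mul (-2 : ℝ)).exp
  have hcomp := (((ha.mul hb).mul hc).mul hd).mul hexp
  simp only [Pi.mul_def] at hcomp
  have hfun : HG a b c d = fun y =>
      hermiteP a y * hermiteP b y * hermiteP c y * hermiteP d y * Real.exp (-2 * y ^ 2) := rfl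
  rw [hfun]
  refine hcomp.congr_deriv ?_
  simp only [HG]
  rw [hermiteP_succ d x]
  push_cast
  ring

lemma key_integral (a b c d : ℕ) :
    ∫ x : ℝ, (2 * (a:ℝ) * HG (a-1) b c d x + 2 * (b:ℝ) * HG a (b-1) c d x
        + 2 * (c:ℝ) * HG a b (c-1) d x
        + (2 * (d:ℝ) * HG a b c (d-1) x
          - (2 * HG a b c (d+1) x + 4 * (d:ℝ) * HG a b c (d-1) x))) = 0 := by
  have h1 : Integrable (fun x => 2 * (a:ℝ) * HG (a-1) b c d x +
      2 * (b:ℝ) * HG a (b-1) c d x + 2 * (c:ℝ) * HG a b (c-1) d x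
      + (2 * (d:ℝ) * HG a b c (d-1) x
          - (2 * HG a b c (d+1) x + 4 * (d:ℝ) * HG a b c (d-1) x))) := by
    exact ((((integrable_HG (a-1) b c d).const_mul _).add
      ((integrable_HG a (b-1) c d).const_mul _)).add
      ((integrable_HG a b (c-1) d).const_mul _)).add
      ((((integrable_HG a b c (d-1)).const_mul _)).sub
        (((integrable_HG a b c (d+1)).const_mul _).add
          ((integrable_HG a b c (d-1)).const_mul _)))
  have := MeasureTheory.integral_of_hasDerivAt_of_tendsto (f := HG a b c d)
    (fun x => key_deriv a b c d x) h1 (tendsto_HG_atBot a b c d) (tendsto_HG_atTop a b c d)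
  simpa using this

lemma key_split (a b c d : ℕ) :
    2 * (a:ℝ) * (∫ x, HG (a-1) b c d x) + 2 * (b:ℝ) * (∫ x, HG a (b-1) c d x)
      + 2 * (c:ℝ) * (∫ x, HG a b (c-1) d x) - 2 * (d:ℝ) * (∫ x, HG a b c (d-1) x)
      - 2 * (∫ x, HG a b c (d+1) x) = 0 := by
  have h := key_integral a b c d
  rw [integral_add, integral_add, integral_add, integral_sub, integral_add] at h
  · simp only [MeasureTheory.integral_const_mul] at h
    linarith [h]
  all_goals first
    | exact (integrable_HG _ _ _ _).const_mul _
    | exact ((integrable_HG _ _ _ _).const_mul _).add ((integrable_HG _ _ _ _).const_mul _)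
    | exact ((integrable_HG _ _ _ _).const_mul _).sub
        (((integrable_HG _ _ _ _).const_mul _).add ((integrable_HG _ _ _ _).const_mul _))
    | exact (((integrable_HG _ _ _ _).const_mul _).add
        ((integrable_HG _ _ _ _).const_mul _)).add ((integrable_HG _ _ _ _).const_mul _)


lemma I_eq (a b c d : ℕ) : I a b c d = Real.sqrt (2 / π) * ∫ x, HG a b c d x := rfl

lemma I_swap14 (a b c d : ℕ) : I a b c d = I d b c a := by
  simp only [I]
  congr 1
  apply integral_congr_ae
  filter_upwards with x
  ring

lemma I_swap12 (a b c d : ℕ) : I a b c d = I b a c d := by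
  simp only [I]
  congr 1
  apply integral_congr_ae
  filter_upwards with x
  ring

lemma I_swap13 (a b c d : ℕ) : I a b c d = I c b a d := by
  simp only [I]
  congr 1
  apply integral_congr_ae
  filter_upwards with x
  ring

lemma I_rec (a b c d : ℕ) : I a b c (d + 1) =
    (a:ℝ) * I (a-1) b c d + (b:ℝ) * I a (b-1) c d + (c:ℝ) * I a b (c-1) d
      - (d:ℝ) * I a b c (d-1) := by
  have h := key_split a b c d
  simp only [I_eq]
  linear_combination (-(Real.sqrt (2 / π)) / 2) * h

lemma I_rec1 (a b c d : ℕ) : I (a + 1) b c d =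
    (d:ℝ) * I a b c (d-1) + (b:ℝ) * I a (b-1) c d + (c:ℝ) * I a b (c-1) d
      - (a:ℝ) * I (a-1) b c d := by
  rw [I_swap14 (a+1) b c d, I_rec d b c a, ← I_swap14, ← I_swap14]
  rw [show I d (b-1) c a = I a (b-1) c d from (I_swap14 a (b-1) c d).symm,
    show I d b (c-1) a = I a b (c-1) d from (I_swap14 a b (c-1) d).symm,
    show I d b c (a-1) = I (a-1) b c d from (I_swap14 (a-1) b c d).symm]

lemma ddfact_shift (a : ℤ) (h : a ≠ -2) : ddfact (a + 2) = ((a : ℝ) + 2) * ddfact a := by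
  simp only [ddfact]
  have e1 : (a + 2 + 1) / 2 = (a + 1) / 2 + 1 := by omega
  rw [e1]
  have e2 : (2:ℝ) ^ ((a + 1) / 2 + 1) = 2 ^ ((a + 1) / 2) * 2 := by
    rw [zpow_add₀ (two_ne_zero)]; norm_num
  rw [e2]
  have e3 : ((a:ℝ) + 2) / 2 + 1 = ((a:ℝ) / 2 + 1) + 1 := by ring
  have hx : (a:ℝ) / 2 + 1 ≠ 0 := by
    intro hc
    apply h
    have : (a:ℝ) = -2 := by linarith
    exact_mod_cast this
  have e5 : Real.Gamma ((((a + 2 : ℤ)):ℝ) / 2 + 1) = ((a:ℝ)/2 + 1) * Real.Gamma ((a:ℝ)/2 + 1) := by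
    push_cast
    rw [e3, Real.Gamma_add_one hx]
  push_cast at e5 ⊢
  rw [e5]
  ring

lemma ddfact_neg_one : ddfact (-1) = 1 := by
  simp only [ddfact]
  norm_num
  rw [Real.Gamma_one_half_eq, div_self (Real.sqrt_ne_zero'.mpr Real.pi_pos)]

noncomputable def D3 (j n m l : ℤ) : ℝ :=
  ddfact (n + m - l - j) * ddfact (n - m + l - j) * ddfact (-n + m + l - j)

lemma I_base : I 0 0 0 0 = 1 := by
  have h : (fun x : ℝ => hermiteP 0 x * hermiteP 0 x * hermiteP 0 x * hermiteP 0 x *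
      Real.exp (-2 * x ^ 2)) = fun x : ℝ => Real.exp (-2 * x ^ 2) := by
    funext x; simp [hermiteP]
  rw [I, h, integral_gaussian 2, ← Real.sqrt_mul (by positivity)]
  rw [show (2 / π) * (π / 2) = 1 by field_simp]
  exact Real.sqrt_one


lemma D3_swap12 (j n m l : ℤ) : D3 j n m l = D3 j m n l := by
  simp only [D3]
  rw [show m + n - l - j = n + m - l - j by ring,
      show m - n + l - j = -n + m + l - j by ring,
      show -m + n + l - j = n - m + l - j by ring]
  ring

lemma D3_swap13 (j n m l : ℤ) : D3 j n m l = D3 j l m n := by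
  simp only [D3]
  rw [show l + m - n - j = -n + m + l - j by ring,
      show l - m + n - j = n - m + l - j by ring,
      show -l + m + n - j = n + m - l - j by ring]
  ring

lemma I0 : ∀ N n m l : ℕ, n + m + l ≤ N → (n + m + l) % 2 = 0 →
    I n m l 0 = D3 1 n m l := by
  intro N
  induction N with
  | zero =>
    intro n m l hle _
    obtain ⟨rfl, rfl, rfl⟩ : n = 0 ∧ m = 0 ∧ l = 0 := by omega
    rw [I_base]
    simp only [D3]
    norm_num [ddfact_neg_one]
  | succ N IH =>
    intro n m l hle hp
    rcases Nat.lt_or_ge (n + m + l) (N + 1) with hlt | hge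
    · exact IH n m l (by omega) hp
    have step : ∀ a b c : ℕ, a + b + c ≤ N → (a + 1 + b + c) % 2 = 0 →
        I (a+1) b c 0 = D3 1 (a+1 : ℕ) b c := by
      intro a b c hab hpar
      have hA : ((a:ℤ) + b - c - 2) ≠ -2 := by omega
      have hB : ((a:ℤ) - b + c - 2) ≠ -2 := by omega
      have hG : (-(a:ℤ) + b + c - 2) ≠ -2 := by omega
      have gb : (b:ℝ) * I a (b-1) c 0 = (b:ℝ) * D3 1 (a:ℤ) ((b:ℤ)-1) (c:ℤ) := by
        rcases b with _ | b'
        · simp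
        · simp only [Nat.succ_sub_one]
          rw [IH a b' c (by omega) (by omega)]
          rw [show ((b'+1:ℕ):ℤ) - 1 = (b':ℤ) by push_cast; ring]
      have gc : (c:ℝ) * I a b (c-1) 0 = (c:ℝ) * D3 1 (a:ℤ) (b:ℤ) ((c:ℤ)-1) := by
        rcases c with _ | c'
        · simp
        · simp only [Nat.succ_sub_one]
          rw [IH a b c' (by omega) (by omega)]
          rw [show ((c'+1:ℕ):ℤ) - 1 = (c':ℤ) by push_cast; ring]
      have ga : (a:ℝ) * I (a-1) b c 0 = (a:ℝ) * D3 1 ((a:ℤ)-1) (b:ℤ) (c:ℤ) := by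
        rcases a with _ | a'
        · simp
        · simp only [Nat.succ_sub_one]
          rw [IH a' b c (by omega) (by omega)]
          rw [show ((a'+1:ℕ):ℤ) - 1 = (a':ℤ) by push_cast; ring]
      rw [I_rec1 a b c 0]
      norm_num
      rw [gb, gc, ga]
      have s1 : ddfact ((a:ℤ) + b - c) = ((a:ℝ) + b - c) * ddfact ((a:ℤ) + b - c - 2) := by
        have h2 := ddfact_shift ((a:ℤ) + b - c - 2) hA
        rw [show (a:ℤ) + b - c - 2 + 2 = (a:ℤ) + b - c by ring] at h2
        rw [h2]; push_cast; ring
      have s2 : ddfact ((a:ℤ) - b + c) = ((a:ℝ) - b + c) * ddfact ((a:ℤ) - b + c - 2) := by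
        have h2 := ddfact_shift ((a:ℤ) - b + c - 2) hB
        rw [show (a:ℤ) - b + c - 2 + 2 = (a:ℤ) - b + c by ring] at h2
        rw [h2]; push_cast; ring
      have s3 : ddfact (-(a:ℤ) + b + c) = (-(a:ℝ) + b + c) * ddfact (-(a:ℤ) + b + c - 2) := by
        have h2 := ddfact_shift (-(a:ℤ) + b + c - 2) hG
        rw [show -(a:ℤ) + b + c - 2 + 2 = -(a:ℤ) + b + c by ring] at h2
        rw [h2]; push_cast; ring
      simp only [D3]
      push_cast
      rw [show (a:ℤ) + 1 + b - c - 1 = (a:ℤ) + b - c by ring,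
          show (a:ℤ) + 1 - b + c - 1 = (a:ℤ) - b + c by ring,
          show -((a:ℤ) + 1) + b + c - 1 = -(a:ℤ) + b + c - 2 by ring,
          show (a:ℤ) + ((b:ℤ) - 1) - c - 1 = (a:ℤ) + b - c - 2 by ring,
          show (a:ℤ) - ((b:ℤ) - 1) + c - 1 = (a:ℤ) - b + c by ring,
          show -(a:ℤ) + ((b:ℤ) - 1) + c - 1 = -(a:ℤ) + b + c - 2 by ring,
          show (a:ℤ) + b - ((c:ℤ) - 1) - 1 = (a:ℤ) + b - c by ring,
          show (a:ℤ) - b + ((c:ℤ) - 1) - 1 = (a:ℤ) - b + c - 2 by ring,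
          show -(a:ℤ) + b + ((c:ℤ) - 1) - 1 = -(a:ℤ) + b + c - 2 by ring,
          show (a:ℤ) - 1 + b - c - 1 = (a:ℤ) + b - c - 2 by ring,
          show (a:ℤ) - 1 - b + c - 1 = (a:ℤ) - b + c - 2 by ring,
          show -((a:ℤ) - 1) + b + c - 1 = -(a:ℤ) + b + c by ring]
      rw [s1, s2, s3]
      push_cast
      ring
    rcases n with _ | n'
    · rcases m with _ | m'
      · rcases l with _ | l'
        · omega
        · rw [I_swap13 0 0 (l'+1) 0, step l' 0 0 (by omega) (by omega), D3_swap13]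
      · rw [I_swap12 0 (m'+1) l 0, step m' 0 l (by omega) (by omega), D3_swap12]
    · exact step n' m l (by omega) (by omega)


noncomputable def Q0 (a b c : ℝ) : ℝ := 1

noncomputable def Q1 (a b c : ℝ) : ℝ := ((-1:ℝ))*c^2 + (2:ℝ)*b*c + ((-1:ℝ))*b^2 + (2:ℝ)*a*c + (2:ℝ)*a*b + ((-1:ℝ))*a^2

noncomputable def Q2 (a b c : ℝ) : ℝ := (1:ℝ) + ((-2:ℝ))*c^2 + c^4 + (4:ℝ)*b*c + ((-4:ℝ))*b*c^3 + ((-2:ℝ))*b^2 + (6:ℝ)*b^2*c^2 + ((-4:ℝ))*b^3*c + b^4 + (4:ℝ)*a*c + ((-4:ℝ))*a*c^3 + (4:ℝ)*a*b + ((-16:ℝ))*a*b*c + (4:ℝ)*a*b*c^2 + (4:ℝ)*a*b^2*c + ((-4:ℝ))*a*b^3 + ((-2:ℝ))*a^2 + (6:ℝ)*a^2*c^2 + (4:ℝ)*a^2*b*c + (6:ℝ)*a^2*b^2 + ((-4:ℝ))*a^3*c + ((-4:ℝ))*a^3*b + a^4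

noncomputable def Q3 (a b c : ℝ) : ℝ := ((-16:ℝ))*c^2 + (8:ℝ)*c^4 + ((-1:ℝ))*c^6 + (32:ℝ)*b*c + ((-32:ℝ))*b*c^3 + (6:ℝ)*b*c^5 + ((-16:ℝ))*b^2 + (48:ℝ)*b^2*c^2 + ((-15:ℝ))*b^2*c^4 + ((-32:ℝ))*b^3*c + (20:ℝ)*b^3*c^3 + (8:ℝ)*b^4 + ((-15:ℝ))*b^4*c^2 + (6:ℝ)*b^5*c + ((-1:ℝ))*b^6 + (32:ℝ)*a*c + ((-32:ℝ))*a*c^3 + (6:ℝ)*a*c^5 + (32:ℝ)*a*b + ((-192:ℝ))*a*b*c + (96:ℝ)*a*b*c^2 + (48:ℝ)*a*b*c^3 + ((-18:ℝ))*a*b*c^4 + (96:ℝ)*a*b^2*c + ((-96:ℝ))*a*b^2*c^2 + (12:ℝ)*a*b^2*c^3 + ((-32:ℝ))*a*b^3 + (48:ℝ)*a*b^3*c + (12:ℝ)*a*b^3*c^2 + ((-18:ℝ))*a*b^4*c + (6:ℝ)*a*b^5 + ((-16:ℝ))*a^2 + (48:ℝ)*a^2*c^2 + ((-15:ℝ))*a^2*c^4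 + (96:ℝ)*a^2*b*c + ((-96:ℝ))*a^2*b*c^2 + (12:ℝ)*a^2*b*c^3 + (48:ℝ)*a^2*b^2 + ((-96:ℝ))*a^2*b^2*c + (6:ℝ)*a^2*b^2*c^2 + (12:ℝ)*a^2*b^3*c + ((-15:ℝ))*a^2*b^4 + ((-32:ℝ))*a^3*c + (20:ℝ)*a^3*c^3 + ((-32:ℝ))*a^3*b + (48:ℝ)*a^3*b*c + (12:ℝ)*a^3*b*c^2 + (12:ℝ)*a^3*b^2*c + (20:ℝ)*a^3*b^3 + (8:ℝ)*a^4 + ((-15:ℝ))*a^4*c^2 + ((-18:ℝ))*a^4*b*c + ((-15:ℝ))*a^4*b^2 + (6:ℝ)*a^5*c + (6:ℝ)*a^5*b + ((-1:ℝ))*a^6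

noncomputable def Q4 (a b c : ℝ) : ℝ := (81:ℝ) + ((-180:ℝ))*c^2 + (118:ℝ)*c^4 + ((-20:ℝ))*c^6 + c^8 + (360:ℝ)*b*c + ((-472:ℝ))*b*c^3 + (120:ℝ)*b*c^5 + ((-8:ℝ))*b*c^7 + ((-180:ℝ))*b^2 + (708:ℝ)*b^2*c^2 + ((-300:ℝ))*b^2*c^4 + (28:ℝ)*b^2*c^6 + ((-472:ℝ))*b^3*c + (400:ℝ)*b^3*c^3 + ((-56:ℝ))*b^3*c^5 + (118:ℝ)*b^4 + ((-300:ℝ))*b^4*c^2 + (70:ℝ)*b^4*c^4 + (120:ℝ)*b^5*c + ((-56:ℝ))*b^5*c^3 + ((-20:ℝ))*b^6 + (28:ℝ)*b^6*c^2 + ((-8:ℝ))*b^7*c + b^8 + (360:ℝ)*a*c + ((-472:ℝ))*a*c^3 + (120:ℝ)*a*c^5 + ((-8:ℝ))*a*c^7 + (360:ℝ)*a*b + ((-3936:ℝ))*a*b*c + (2776:ℝ)*a*b*c^2 + (960:ℝ)*a*b*c^3 + ((-616:ℝ))*a*b*c^4 + ((-96:ℝ))*a*b*c^5 + (40:ℝ)*a*b*c^6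 + (2776:ℝ)*a*b^2*c + ((-3456:ℝ))*a*b^2*c^2 + (496:ℝ)*a*b^2*c^3 + (384:ℝ)*a*b^2*c^4 + ((-72:ℝ))*a*b^2*c^5 + ((-472:ℝ))*a*b^3 + (960:ℝ)*a*b^3*c + (496:ℝ)*a*b^3*c^2 + ((-576:ℝ))*a*b^3*c^3 + (40:ℝ)*a*b^3*c^4 + ((-616:ℝ))*a*b^4*c + (384:ℝ)*a*b^4*c^2 + (40:ℝ)*a*b^4*c^3 + (120:ℝ)*a*b^5 + ((-96:ℝ))*a*b^5*c + ((-72:ℝ))*a*b^5*c^2 + (40:ℝ)*a*b^6*c + ((-8:ℝ))*a*b^7 + ((-180:ℝ))*a^2 + (708:ℝ)*a^2*c^2 + ((-300:ℝ))*a^2*c^4 + (28:ℝ)*a^2*c^6 + (2776:ℝ)*a^2*b*c + ((-3456:ℝ))*a^2*b*c^2 + (496:ℝ)*a^2*b*c^3 + (384:ℝ)*a^2*b*c^4 + ((-72:ℝ))*a^2*b*c^5 + (708:ℝ)*a^2*b^2 + ((-3456:ℝ))*a^2*b^2*c + (2424:ℝ)*a^2*b^2*c^2 + ((-384:ℝ))*a^2*b^2*c^3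 + (36:ℝ)*a^2*b^2*c^4 + (496:ℝ)*a^2*b^3*c + ((-384:ℝ))*a^2*b^3*c^2 + (16:ℝ)*a^2*b^3*c^3 + ((-300:ℝ))*a^2*b^4 + (384:ℝ)*a^2*b^4*c + (36:ℝ)*a^2*b^4*c^2 + ((-72:ℝ))*a^2*b^5*c + (28:ℝ)*a^2*b^6 + ((-472:ℝ))*a^3*c + (400:ℝ)*a^3*c^3 + ((-56:ℝ))*a^3*c^5 + ((-472:ℝ))*a^3*b + (960:ℝ)*a^3*b*c + (496:ℝ)*a^3*b*c^2 + ((-576:ℝ))*a^3*b*c^3 + (40:ℝ)*a^3*b*c^4 + (496:ℝ)*a^3*b^2*c + ((-384:ℝ))*a^3*b^2*c^2 + (16:ℝ)*a^3*b^2*c^3 + (400:ℝ)*a^3*b^3 + ((-576:ℝ))*a^3*b^3*c + (16:ℝ)*a^3*b^3*c^2 + (40:ℝ)*a^3*b^4*c + ((-56:ℝ))*a^3*b^5 + (118:ℝ)*a^4 + ((-300:ℝ))*a^4*c^2 + (70:ℝ)*a^4*c^4 + ((-616:ℝ))*a^4*b*c + (384:ℝ)*a^4*b*c^2 + (40:ℝ)*a^4*b*c^3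 + ((-300:ℝ))*a^4*b^2 + (384:ℝ)*a^4*b^2*c + (36:ℝ)*a^4*b^2*c^2 + (40:ℝ)*a^4*b^3*c + (70:ℝ)*a^4*b^4 + (120:ℝ)*a^5*c + ((-56:ℝ))*a^5*c^3 + (120:ℝ)*a^5*b + ((-96:ℝ))*a^5*b*c + ((-72:ℝ))*a^5*b*c^2 + ((-72:ℝ))*a^5*b^2*c + ((-56:ℝ))*a^5*b^3 + ((-20:ℝ))*a^6 + (28:ℝ)*a^6*c^2 + (40:ℝ)*a^6*b*c + (28:ℝ)*a^6*b^2 + ((-8:ℝ))*a^7*c + ((-8:ℝ))*a^7*b + a^8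


lemma Ilvl0 (n m l : ℕ) (h : (n + m + l + 0) % 2 = 0) :
    I n m l 0 = D3 1 n m l * Q0 n m l := by
  rw [I0 (n+m+l) n m l le_rfl (by omega)]
  simp [Q0]


lemma Ilvl1 (n m l : ℕ) (h : (n + m + l + 1) % 2 = 0) :
    I n m l 1 = D3 2 n m l * Q1 n m l := by
  have hr := I_rec n m l 0
  norm_num at hr
  have gn : (n:ℝ) * I (n-1) m l 0 = (n:ℝ) * (D3 1 ((n:ℤ)-1) (↑m:ℤ) (↑l:ℤ) * Q0 ((n:ℝ)-1) ((m:ℝ)) ((l:ℝ))) := by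
    rcases n with _ | x'
    · simp
    · simp only [Nat.succ_sub_one]
      rw [Ilvl0 x' m l (by omega)]
      rw [show ((x'+1:ℕ):ℤ) - 1 = (x':ℤ) by push_cast; ring,
          show ((x'+1:ℕ):ℝ) - 1 = (x':ℝ) by push_cast; ring]
  have gm : (m:ℝ) * I n (m-1) l 0 = (m:ℝ) * (D3 1 (↑n:ℤ) ((m:ℤ)-1) (↑l:ℤ) * Q0 ((n:ℝ)) ((m:ℝ)-1) ((l:ℝ))) := by
    rcases m with _ | x'
    · simp
    · simp only [Nat.succ_sub_one]
      rw [Ilvl0 n x' l (by omega)]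
      rw [show ((x'+1:ℕ):ℤ) - 1 = (x':ℤ) by push_cast; ring,
          show ((x'+1:ℕ):ℝ) - 1 = (x':ℝ) by push_cast; ring]
  have gl : (l:ℝ) * I n m (l-1) 0 = (l:ℝ) * (D3 1 (↑n:ℤ) (↑m:ℤ) ((l:ℤ)-1) * Q0 ((n:ℝ)) ((m:ℝ)) ((l:ℝ)-1)) := by
    rcases l with _ | x'
    · simp
    · simp only [Nat.succ_sub_one]
      rw [Ilvl0 n m x' (by omega)]
      rw [show ((x'+1:ℕ):ℤ) - 1 = (x':ℤ) by push_cast; ring,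
          show ((x'+1:ℕ):ℝ) - 1 = (x':ℝ) by push_cast; ring]
  rw [hr, gn, gm, gl]
  have hA : ((n:ℤ) + ↑m - ↑l - 2) ≠ -2 := by omega
  have hB : ((n:ℤ) - ↑m + ↑l - 2) ≠ -2 := by omega
  have hG : (-(n:ℤ) + ↑m + ↑l - 2) ≠ -2 := by omega
  have s1 : ddfact ((n:ℤ) + ↑m - ↑l) = ((n:ℝ) + ↑m - ↑l) * ddfact ((n:ℤ) + ↑m - ↑l - 2) := by
    have h2 := ddfact_shift ((n:ℤ) + ↑m - ↑l - 2) hA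
    rw [show (n:ℤ) + ↑m - ↑l - 2 + 2 = (n:ℤ) + ↑m - ↑l by ring] at h2
    rw [h2]; push_cast; ring
  have s2 : ddfact ((n:ℤ) - ↑m + ↑l) = ((n:ℝ) - ↑m + ↑l) * ddfact ((n:ℤ) - ↑m + ↑l - 2) := by
    have h2 := ddfact_shift ((n:ℤ) - ↑m + ↑l - 2) hB
    rw [show (n:ℤ) - ↑m + ↑l - 2 + 2 = (n:ℤ) - ↑m + ↑l by ring] at h2
    rw [h2]; push_cast; ring
  have s3 : ddfact (-(n:ℤ) + ↑m + ↑l) = (-(n:ℝ) + ↑m + ↑l) * ddfact (-(n:ℤ) + ↑m + ↑l - 2) := by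
    have h2 := ddfact_shift (-(n:ℤ) + ↑m + ↑l - 2) hG
    rw [show -(n:ℤ) + ↑m + ↑l - 2 + 2 = -(n:ℤ) + ↑m + ↑l by ring] at h2
    rw [h2]; push_cast; ring
  simp only [D3]
  push_cast
  rw [show ((n:ℤ) - 1 + ↑m - ↑l - 1 : ℤ) = (n:ℤ) + ↑m - ↑l - 2 by ring,
      show ((n:ℤ) - 1 - ↑m + ↑l - 1 : ℤ) = (n:ℤ) - ↑m + ↑l - 2 by ring,
      show (-((n:ℤ) - 1) + ↑m + ↑l - 1 : ℤ) = -(n:ℤ) + ↑m + ↑l by ring,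
      show ((n:ℤ) + (↑m - 1) - ↑l - 1 : ℤ) = (n:ℤ) + ↑m - ↑l - 2 by ring,
      show ((n:ℤ) - (↑m - 1) + ↑l - 1 : ℤ) = (n:ℤ) - ↑m + ↑l by ring,
      show (-(n:ℤ) + (↑m - 1) + ↑l - 1 : ℤ) = -(n:ℤ) + ↑m + ↑l - 2 by ring,
      show ((n:ℤ) + ↑m - (↑l - 1) - 1 : ℤ) = (n:ℤ) + ↑m - ↑l by ring,
      show ((n:ℤ) - ↑m + (↑l - 1) - 1 : ℤ) = (n:ℤ) - ↑m + ↑l - 2 by ring,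
      show (-(n:ℤ) + ↑m + (↑l - 1) - 1 : ℤ) = -(n:ℤ) + ↑m + ↑l - 2 by ring]
  rw [s1, s2, s3]
  simp only [Q0, Q1, Q2, Q3, Q4]
  push_cast
  ring



lemma Ilvl2 (n m l : ℕ) (h : (n + m + l + 2) % 2 = 0) :
    I n m l 2 = D3 3 n m l * Q2 n m l := by
  have hr := I_rec n m l 1
  norm_num at hr
  have gn : (n:ℝ) * I (n-1) m l 1 = (n:ℝ) * (D3 2 ((n:ℤ)-1) (↑m:ℤ) (↑l:ℤ) * Q1 ((n:ℝ)-1) ((m:ℝ)) ((l:ℝ))) := by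
    rcases n with _ | x'
    · simp
    · simp only [Nat.succ_sub_one]
      rw [Ilvl1 x' m l (by omega)]
      rw [show ((x'+1:ℕ):ℤ) - 1 = (x':ℤ) by push_cast; ring,
          show ((x'+1:ℕ):ℝ) - 1 = (x':ℝ) by push_cast; ring]
  have gm : (m:ℝ) * I n (m-1) l 1 = (m:ℝ) * (D3 2 (↑n:ℤ) ((m:ℤ)-1) (↑l:ℤ) * Q1 ((n:ℝ)) ((m:ℝ)-1) ((l:ℝ))) := by
    rcases m with _ | x'
    · simp
    · simp only [Nat.succ_sub_one]
      rw [Ilvl1 n x' l (by omega)]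
      rw [show ((x'+1:ℕ):ℤ) - 1 = (x':ℤ) by push_cast; ring,
          show ((x'+1:ℕ):ℝ) - 1 = (x':ℝ) by push_cast; ring]
  have gl : (l:ℝ) * I n m (l-1) 1 = (l:ℝ) * (D3 2 (↑n:ℤ) (↑m:ℤ) ((l:ℤ)-1) * Q1 ((n:ℝ)) ((m:ℝ)) ((l:ℝ)-1)) := by
    rcases l with _ | x'
    · simp
    · simp only [Nat.succ_sub_one]
      rw [Ilvl1 n m x' (by omega)]
      rw [show ((x'+1:ℕ):ℤ) - 1 = (x':ℤ) by push_cast; ring,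
          show ((x'+1:ℕ):ℝ) - 1 = (x':ℝ) by push_cast; ring]
  have gd : I n m l 0 = D3 1 n m l * Q0 n m l := Ilvl0 n m l (by omega)
  rw [hr, gn, gm, gl, gd]
  have hA : ((n:ℤ) + ↑m - ↑l - 3) ≠ -2 := by omega
  have hB : ((n:ℤ) - ↑m + ↑l - 3) ≠ -2 := by omega
  have hG : (-(n:ℤ) + ↑m + ↑l - 3) ≠ -2 := by omega
  have s1 : ddfact ((n:ℤ) + ↑m - ↑l - 1) = ((n:ℝ) + ↑m - ↑l - 1) * ddfact ((n:ℤ) + ↑m - ↑l - 3) := by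
    have h2 := ddfact_shift ((n:ℤ) + ↑m - ↑l - 3) hA
    rw [show (n:ℤ) + ↑m - ↑l - 3 + 2 = (n:ℤ) + ↑m - ↑l - 1 by ring] at h2
    rw [h2]; push_cast; ring
  have s2 : ddfact ((n:ℤ) - ↑m + ↑l - 1) = ((n:ℝ) - ↑m + ↑l - 1) * ddfact ((n:ℤ) - ↑m + ↑l - 3) := by
    have h2 := ddfact_shift ((n:ℤ) - ↑m + ↑l - 3) hB
    rw [show (n:ℤ) - ↑m + ↑l - 3 + 2 = (n:ℤ) - ↑m + ↑l - 1 by ring] at h2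
    rw [h2]; push_cast; ring
  have s3 : ddfact (-(n:ℤ) + ↑m + ↑l - 1) = (-(n:ℝ) + ↑m + ↑l - 1) * ddfact (-(n:ℤ) + ↑m + ↑l - 3) := by
    have h2 := ddfact_shift (-(n:ℤ) + ↑m + ↑l - 3) hG
    rw [show -(n:ℤ) + ↑m + ↑l - 3 + 2 = -(n:ℤ) + ↑m + ↑l - 1 by ring] at h2
    rw [h2]; push_cast; ring
  simp only [D3]
  push_cast
  rw [show ((n:ℤ) - 1 + ↑m - ↑l - 2 : ℤ) = (n:ℤ) + ↑m - ↑l - 3 by ring,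
      show ((n:ℤ) - 1 - ↑m + ↑l - 2 : ℤ) = (n:ℤ) - ↑m + ↑l - 3 by ring,
      show (-((n:ℤ) - 1) + ↑m + ↑l - 2 : ℤ) = -(n:ℤ) + ↑m + ↑l - 1 by ring,
      show ((n:ℤ) + (↑m - 1) - ↑l - 2 : ℤ) = (n:ℤ) + ↑m - ↑l - 3 by ring,
      show ((n:ℤ) - (↑m - 1) + ↑l - 2 : ℤ) = (n:ℤ) - ↑m + ↑l - 1 by ring,
      show (-(n:ℤ) + (↑m - 1) + ↑l - 2 : ℤ) = -(n:ℤ) + ↑m + ↑l - 3 by ring,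
      show ((n:ℤ) + ↑m - (↑l - 1) - 2 : ℤ) = (n:ℤ) + ↑m - ↑l - 1 by ring,
      show ((n:ℤ) - ↑m + (↑l - 1) - 2 : ℤ) = (n:ℤ) - ↑m + ↑l - 3 by ring,
      show (-(n:ℤ) + ↑m + (↑l - 1) - 2 : ℤ) = -(n:ℤ) + ↑m + ↑l - 3 by ring]
  rw [s1, s2, s3]
  simp only [Q0, Q1, Q2, Q3, Q4]
  push_cast
  ring



lemma Ilvl3 (n m l : ℕ) (h : (n + m + l + 3) % 2 = 0) :
    I n m l 3 = D3 4 n m l * Q3 n m l := by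
  have hr := I_rec n m l 2
  norm_num at hr
  have gn : (n:ℝ) * I (n-1) m l 2 = (n:ℝ) * (D3 3 ((n:ℤ)-1) (↑m:ℤ) (↑l:ℤ) * Q2 ((n:ℝ)-1) ((m:ℝ)) ((l:ℝ))) := by
    rcases n with _ | x'
    · simp
    · simp only [Nat.succ_sub_one]
      rw [Ilvl2 x' m l (by omega)]
      rw [show ((x'+1:ℕ):ℤ) - 1 = (x':ℤ) by push_cast; ring,
          show ((x'+1:ℕ):ℝ) - 1 = (x':ℝ) by push_cast; ring]
  have gm : (m:ℝ) * I n (m-1) l 2 = (m:ℝ) * (D3 3 (↑n:ℤ) ((m:ℤ)-1) (↑l:ℤ) * Q2 ((n:ℝ)) ((m:ℝ)-1) ((l:ℝ))) := by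
    rcases m with _ | x'
    · simp
    · simp only [Nat.succ_sub_one]
      rw [Ilvl2 n x' l (by omega)]
      rw [show ((x'+1:ℕ):ℤ) - 1 = (x':ℤ) by push_cast; ring,
          show ((x'+1:ℕ):ℝ) - 1 = (x':ℝ) by push_cast; ring]
  have gl : (l:ℝ) * I n m (l-1) 2 = (l:ℝ) * (D3 3 (↑n:ℤ) (↑m:ℤ) ((l:ℤ)-1) * Q2 ((n:ℝ)) ((m:ℝ)) ((l:ℝ)-1)) := by
    rcases l with _ | x'
    · simp
    · simp only [Nat.succ_sub_one]
      rw [Ilvl2 n m x' (by omega)]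
      rw [show ((x'+1:ℕ):ℤ) - 1 = (x':ℤ) by push_cast; ring,
          show ((x'+1:ℕ):ℝ) - 1 = (x':ℝ) by push_cast; ring]
  have gd : I n m l 1 = D3 2 n m l * Q1 n m l := Ilvl1 n m l (by omega)
  rw [hr, gn, gm, gl, gd]
  have hA : ((n:ℤ) + ↑m - ↑l - 4) ≠ -2 := by omega
  have hB : ((n:ℤ) - ↑m + ↑l - 4) ≠ -2 := by omega
  have hG : (-(n:ℤ) + ↑m + ↑l - 4) ≠ -2 := by omega
  have s1 : ddfact ((n:ℤ) + ↑m - ↑l - 2) = ((n:ℝ) + ↑m - ↑l - 2) * ddfact ((n:ℤ) + ↑m - ↑l - 4) := by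
    have h2 := ddfact_shift ((n:ℤ) + ↑m - ↑l - 4) hA
    rw [show (n:ℤ) + ↑m - ↑l - 4 + 2 = (n:ℤ) + ↑m - ↑l - 2 by ring] at h2
    rw [h2]; push_cast; ring
  have s2 : ddfact ((n:ℤ) - ↑m + ↑l - 2) = ((n:ℝ) - ↑m + ↑l - 2) * ddfact ((n:ℤ) - ↑m + ↑l - 4) := by
    have h2 := ddfact_shift ((n:ℤ) - ↑m + ↑l - 4) hB
    rw [show (n:ℤ) - ↑m + ↑l - 4 + 2 = (n:ℤ) - ↑m + ↑l - 2 by ring] at h2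
    rw [h2]; push_cast; ring
  have s3 : ddfact (-(n:ℤ) + ↑m + ↑l - 2) = (-(n:ℝ) + ↑m + ↑l - 2) * ddfact (-(n:ℤ) + ↑m + ↑l - 4) := by
    have h2 := ddfact_shift (-(n:ℤ) + ↑m + ↑l - 4) hG
    rw [show -(n:ℤ) + ↑m + ↑l - 4 + 2 = -(n:ℤ) + ↑m + ↑l - 2 by ring] at h2
    rw [h2]; push_cast; ring
  simp only [D3]
  push_cast
  rw [show ((n:ℤ) - 1 + ↑m - ↑l - 3 : ℤ) = (n:ℤ) + ↑m - ↑l - 4 by ring,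
      show ((n:ℤ) - 1 - ↑m + ↑l - 3 : ℤ) = (n:ℤ) - ↑m + ↑l - 4 by ring,
      show (-((n:ℤ) - 1) + ↑m + ↑l - 3 : ℤ) = -(n:ℤ) + ↑m + ↑l - 2 by ring,
      show ((n:ℤ) + (↑m - 1) - ↑l - 3 : ℤ) = (n:ℤ) + ↑m - ↑l - 4 by ring,
      show ((n:ℤ) - (↑m - 1) + ↑l - 3 : ℤ) = (n:ℤ) - ↑m + ↑l - 2 by ring,
      show (-(n:ℤ) + (↑m - 1) + ↑l - 3 : ℤ) = -(n:ℤ) + ↑m + ↑l - 4 by ring,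
      show ((n:ℤ) + ↑m - (↑l - 1) - 3 : ℤ) = (n:ℤ) + ↑m - ↑l - 2 by ring,
      show ((n:ℤ) - ↑m + (↑l - 1) - 3 : ℤ) = (n:ℤ) - ↑m + ↑l - 4 by ring,
      show (-(n:ℤ) + ↑m + (↑l - 1) - 3 : ℤ) = -(n:ℤ) + ↑m + ↑l - 4 by ring]
  rw [s1, s2, s3]
  simp only [Q0, Q1, Q2, Q3, Q4]
  push_cast
  ring



lemma Ilvl4 (n m l : ℕ) (h : (n + m + l + 4) % 2 = 0) :
    I n m l 4 = D3 5 n m l * Q4 n m l := by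
  have hr := I_rec n m l 3
  norm_num at hr
  have gn : (n:ℝ) * I (n-1) m l 3 = (n:ℝ) * (D3 4 ((n:ℤ)-1) (↑m:ℤ) (↑l:ℤ) * Q3 ((n:ℝ)-1) ((m:ℝ)) ((l:ℝ))) := by
    rcases n with _ | x'
    · simp
    · simp only [Nat.succ_sub_one]
      rw [Ilvl3 x' m l (by omega)]
      rw [show ((x'+1:ℕ):ℤ) - 1 = (x':ℤ) by push_cast; ring,
          show ((x'+1:ℕ):ℝ) - 1 = (x':ℝ) by push_cast; ring]
  have gm : (m:ℝ) * I n (m-1) l 3 = (m:ℝ) * (D3 4 (↑n:ℤ) ((m:ℤ)-1) (↑l:ℤ) * Q3 ((n:ℝ)) ((m:ℝ)-1) ((l:ℝ))) := by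
    rcases m with _ | x'
    · simp
    · simp only [Nat.succ_sub_one]
      rw [Ilvl3 n x' l (by omega)]
      rw [show ((x'+1:ℕ):ℤ) - 1 = (x':ℤ) by push_cast; ring,
          show ((x'+1:ℕ):ℝ) - 1 = (x':ℝ) by push_cast; ring]
  have gl : (l:ℝ) * I n m (l-1) 3 = (l:ℝ) * (D3 4 (↑n:ℤ) (↑m:ℤ) ((l:ℤ)-1) * Q3 ((n:ℝ)) ((m:ℝ)) ((l:ℝ)-1)) := by
    rcases l with _ | x'
    · simp
    · simp only [Nat.succ_sub_one]
      rw [Ilvl3 n m x' (by omega)]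
      rw [show ((x'+1:ℕ):ℤ) - 1 = (x':ℤ) by push_cast; ring,
          show ((x'+1:ℕ):ℝ) - 1 = (x':ℝ) by push_cast; ring]
  have gd : I n m l 2 = D3 3 n m l * Q2 n m l := Ilvl2 n m l (by omega)
  rw [hr, gn, gm, gl, gd]
  have hA : ((n:ℤ) + ↑m - ↑l - 5) ≠ -2 := by omega
  have hB : ((n:ℤ) - ↑m + ↑l - 5) ≠ -2 := by omega
  have hG : (-(n:ℤ) + ↑m + ↑l - 5) ≠ -2 := by omega
  have s1 : ddfact ((n:ℤ) + ↑m - ↑l - 3) = ((n:ℝ) + ↑m - ↑l - 3) * ddfact ((n:ℤ) + ↑m - ↑l - 5) := by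
    have h2 := ddfact_shift ((n:ℤ) + ↑m - ↑l - 5) hA
    rw [show (n:ℤ) + ↑m - ↑l - 5 + 2 = (n:ℤ) + ↑m - ↑l - 3 by ring] at h2
    rw [h2]; push_cast; ring
  have s2 : ddfact ((n:ℤ) - ↑m + ↑l - 3) = ((n:ℝ) - ↑m + ↑l - 3) * ddfact ((n:ℤ) - ↑m + ↑l - 5) := by
    have h2 := ddfact_shift ((n:ℤ) - ↑m + ↑l - 5) hB
    rw [show (n:ℤ) - ↑m + ↑l - 5 + 2 = (n:ℤ) - ↑m + ↑l - 3 by ring] at h2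
    rw [h2]; push_cast; ring
  have s3 : ddfact (-(n:ℤ) + ↑m + ↑l - 3) = (-(n:ℝ) + ↑m + ↑l - 3) * ddfact (-(n:ℤ) + ↑m + ↑l - 5) := by
    have h2 := ddfact_shift (-(n:ℤ) + ↑m + ↑l - 5) hG
    rw [show -(n:ℤ) + ↑m + ↑l - 5 + 2 = -(n:ℤ) + ↑m + ↑l - 3 by ring] at h2
    rw [h2]; push_cast; ring
  simp only [D3]
  push_cast
  rw [show ((n:ℤ) - 1 + ↑m - ↑l - 4 : ℤ) = (n:ℤ) + ↑m - ↑l - 5 by ring,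
      show ((n:ℤ) - 1 - ↑m + ↑l - 4 : ℤ) = (n:ℤ) - ↑m + ↑l - 5 by ring,
      show (-((n:ℤ) - 1) + ↑m + ↑l - 4 : ℤ) = -(n:ℤ) + ↑m + ↑l - 3 by ring,
      show ((n:ℤ) + (↑m - 1) - ↑l - 4 : ℤ) = (n:ℤ) + ↑m - ↑l - 5 by ring,
      show ((n:ℤ) - (↑m - 1) + ↑l - 4 : ℤ) = (n:ℤ) - ↑m + ↑l - 3 by ring,
      show (-(n:ℤ) + (↑m - 1) + ↑l - 4 : ℤ) = -(n:ℤ) + ↑m + ↑l - 5 by ring,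
      show ((n:ℤ) + ↑m - (↑l - 1) - 4 : ℤ) = (n:ℤ) + ↑m - ↑l - 3 by ring,
      show ((n:ℤ) - ↑m + (↑l - 1) - 4 : ℤ) = (n:ℤ) - ↑m + ↑l - 5 by ring,
      show (-(n:ℤ) + ↑m + (↑l - 1) - 4 : ℤ) = -(n:ℤ) + ↑m + ↑l - 5 by ring]
  rw [s1, s2, s3]
  simp only [Q0, Q1, Q2, Q3, Q4]
  push_cast
  ring



end helpers

set_option maxHeartbeats 1600000 in
theorem I4_four_eq (n m l : ℕ) (h : Even (n + m + l))
    (P₁ P₄ : ℝ)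
    (hP₁ : P₁ = (n : ℝ) ^ 2 + (m : ℝ) ^ 2 + (l : ℝ) ^ 2 - 2 * n * m - 2 * n * l - 2 * m * l)
    (hP₄ : P₄ = P₁ ^ 4 - 20 * P₁ ^ 3 + (-96 * n * m * l + 118) * P₁ ^ 2 +
        (960 * n * m * l - 180) * P₁ -
        256 * n * m * l * ((n : ℝ) ^ 3 + (m : ℝ) ^ 3 + (l : ℝ) ^ 3) +
        256 * n * m * l *
          ((n : ℝ) ^ 2 * m + (n : ℝ) ^ 2 * l + (m : ℝ) ^ 2 * n + (m : ℝ) ^ 2 * l +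
            (l : ℝ) ^ 2 * n + (l : ℝ) ^ 2 * m) +
        2304 * (n : ℝ) ^ 2 * (m : ℝ) ^ 2 * (l : ℝ) ^ 2 -
        1536 * n * m * l * ((n : ℝ) * m + (n : ℝ) * l + (m : ℝ) * l) +
        2304 * n * m * l * ((n : ℝ) + m + l) - 3936 * n * m * l + 81) :
    I n m l 4 =
      ddfact ((n : ℤ) + m - l - 5) * ddfact ((n : ℤ) - m + l - 5) *
        ddfact (-(n : ℤ) + m + l - 5) * P₄ := by
  have hp : (n + m + l + 4) % 2 = 0 := by
    rcases h with ⟨t, ht⟩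
    omega
  rw [Ilvl4 n m l hp]
  subst hP₄ hP₁
  simp only [D3, Q4]
  push_cast
  ring
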